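/- For all integers t ≥ 4, if x is a positive integer with x^2 = 2^{2t+3} + 16t + 1, then (2^{2t+3}) < x^2 < 2^{2t+3} + 2^{t+3}· √2 + 1 forces x = ⌊2^{t+1}√2⌋ + 1, i.e. x - 1 = ⌊2^{t+1}√2⌋. -/
import Mathlib

lemma aux_pow (s : ℕ) : (s + 4)^2 ≤ 2^(2*s+5) := by
  induction s with
  | zero => norm_num
  | succ n ih =>
    have h2 : 2^(2*(n+1)+5) = 4 * 2^(2*n+5) := by ring
    have h3 : (n+1+4)^2 ≤ 4*(n+4)^2 := by nlinarith [sq_nonneg n, n.zero_le]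
    rw [h2]
    exact h3.trans (Nat.mul_le_mul_left 4 ih)

theorem stmt_7 (t x : ℕ) (ht : 4 ≤ t) (hx : 0 < x)
    (h : (x : ℤ) ^ 2 = 2 ^ (2 * t + 3) + 16 * t + 1) :
    (x : ℤ) = ⌊(2 : ℝ) ^ (t + 1) * Real.sqrt 2⌋ + 1 := by
  set y : ℝ := (2 : ℝ) ^ (t + 1) * Real.sqrt 2 with hydef
  have hy0 : 0 ≤ y := by positivity
  have hy2 : y ^ 2 = 2 ^ (2 * t + 3) := by
    rw [hydef, mul_pow, Real.sq_sqrt (by norm_num : (0:ℝ) ≤ 2)]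
    ring
  -- bound 64 t^2 ≤ 2^(2t+3)
  obtain ⟨s, rfl⟩ : ∃ s, t = s + 4 := ⟨t - 4, by omega⟩
  have hpown : 64 * (s + 4)^2 ≤ 2^(2*(s+4)+3) := by
    have := aux_pow s
    have h2 : 2^(2*(s+4)+3) = 64 * 2^(2*s+5) := by ring
    rw [h2]
    omega
  have hpow : (64 : ℤ) * ((s:ℤ) + 4)^2 ≤ 2^(2*(s+4)+3) := by exact_mod_cast hpown
  have hx0 : (0:ℤ) ≤ (x:ℤ) := by positivity
  -- x ≥ 8t+1
  have hx8 : (8 * ((s:ℤ)+4) + 1) ≤ (x:ℤ) := by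
    refine le_of_pow_le_pow_left₀ (two_ne_zero) hx0 ?_
    push_cast at h ⊢
    nlinarith [hpow]
  -- floor y = x - 1
  have hfloor : ⌊y⌋ = (x:ℤ) - 1 := by
    rw [Int.floor_eq_iff]
    constructor
    · -- (x-1 : ℝ) ≤ y
      have h1 : ((x:ℤ) - 1)^2 ≤ (2:ℤ)^(2*(s+4)+3) := by push_cast at h; nlinarith [hx8]
      have h1r : (((x:ℝ)) - 1)^2 ≤ y^2 := by
        rw [hy2]
        exact_mod_cast h1
      have := le_of_pow_le_pow_left₀ (two_ne_zero) hy0 h1r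
      push_cast
      linarith
    · -- y < x
      have h2 : y^2 < (x:ℝ)^2 := by
        rw [hy2]
        have : (2:ℤ)^(2*(s+4)+3) < (x:ℤ)^2 := by omega
        exact_mod_cast this
      have := lt_of_pow_lt_pow_left₀ 2 (by positivity) h2
      push_cast
      linarith
  omega
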